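/- Let X be an irreducible topological space whose topology is Noetherian (every descending chain of closed subsets stabilizes). Let {C_i}_{i∈I} be an infinite family of pairwise distinct closed subsets of X, each of which is a maximal element of the set of proper closed irreducible subsets of X (ordered by inclusion). Then the union ⋃_{i∈I} C_i is dense in X. -/
import Mathlib


lemma isIrreducible_preimage_val' {X : Type*} [TopologicalSpace X] {Y C : Set X}
    (hC : IsIrreducible C) (hCY : C ⊆ Y) :
    IsIrreducible ((Subtype.val : Y → X) ⁻¹' C) := by
  obtain ⟨x, hx⟩ := hC.nonempty
  refine ⟨⟨⟨x, hCY hx⟩, hx⟩, ?_⟩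
  intro u v hu hv ⟨a, hau, ha⟩ ⟨b, hbv, hb⟩
  obtain ⟨U, hU, rfl⟩ := isOpen_induced_iff.mp hu
  obtain ⟨V, hV, rfl⟩ := isOpen_induced_iff.mp hv
  obtain ⟨z, hzC, hzU, hzV⟩ := hC.2 U V hU hV ⟨a, hau, ha⟩ ⟨b, hbv, hb⟩
  exact ⟨⟨z, hCY hzC⟩, hzC, hzU, hzV⟩

/-- Let `X` be an irreducible Noetherian topological space and `(C i)` an infinite family of
pairwise distinct closed subsets, each of which is maximal among proper closed irreducible
subsets of `X`. Then `⋃ i, C i` is dense in `X`. -/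
theorem dense_iUnion_of_maximal_proper_closed_irreducible {X : Type*} [TopologicalSpace X]
    [TopologicalSpace.NoetherianSpace X] [IrreducibleSpace X]
    {I : Type*} [Infinite I] (C : I → Set X) (hinj : Function.Injective C)
    (hmax : ∀ i, Maximal (fun S : Set X => IsClosed S ∧ IsIrreducible S ∧ S ≠ Set.univ) (C i)) :
    Dense (⋃ i, C i) := by
  by_contra hdense
  set Y : Set X := closure (⋃ i, C i) with hY
  have hYne : Y ≠ Set.univ := by
    intro h
    exact hdense (dense_iff_closure_eq.mpr h)
  have hYclosed : IsClosed Y := isClosed_closure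
  have hCY : ∀ i, C i ⊆ Y := fun i =>
    (Set.subset_iUnion C i).trans subset_closure
  -- Map each `i` to the irreducible component of `Y` given by `C i`.
  have hmem : ∀ i, (Subtype.val ⁻¹' C i : Set Y) ∈ irreducibleComponents Y := by
    intro i
    refine ⟨isIrreducible_preimage_val' (hmax i).1.2.1 (hCY i), ?_⟩
    intro t ht hle
    -- `t` is irreducible in `Y`; push forward to `X`.
    have htX : IsIrreducible (closure (Subtype.val '' t)) :=
      (ht.image _ continuous_subtype_val.continuousOn).closure
    have htXsub : closure (Subtype.val '' t) ⊆ Y := by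
      apply closure_minimal _ hYclosed
      rintro x ⟨y, _, rfl⟩
      exact y.2
    have hne : closure (Subtype.val '' t) ≠ Set.univ := fun h => hYne
      (Set.eq_univ_of_univ_subset (h ▸ htXsub))
    have hCsub : C i ⊆ closure (Subtype.val '' t) := by
      refine subset_trans ?_ subset_closure
      intro x hx
      exact ⟨⟨x, hCY i hx⟩, hle hx, rfl⟩
    have := (hmax i).2 ⟨isClosed_closure, htX, hne⟩ hCsub
    intro y hy
    exact this (subset_closure ⟨y, hy, rfl⟩ : (y : X) ∈ closure (Subtype.val '' t))
  -- The map `i ↦ val ⁻¹' C i` is injective into a finite set: contradiction.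
  have hfin : (irreducibleComponents Y).Finite :=
    TopologicalSpace.NoetherianSpace.finite_irreducibleComponents
  have := hfin.to_subtype
  obtain ⟨i, j, hij, heq⟩ := Finite.exists_ne_map_eq_of_infinite
    (fun i : I => (⟨Subtype.val ⁻¹' C i, hmem i⟩ : irreducibleComponents Y))
  apply hij
  apply hinj
  have heq' : (Subtype.val ⁻¹' C i : Set Y) = Subtype.val ⁻¹' C j :=
    congrArg Subtype.val heq
  have h1 := congrArg (fun s : Set Y => Subtype.val '' s) heq'
  simpa [Subtype.image_preimage_coe, Set.inter_eq_right.mpr (hCY i),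
    Set.inter_eq_right.mpr (hCY j)] using h1
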